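/- Let N ⊴ G with φ(N) ⊆ N, ψ(N) ⊆ N, and let φ̄, ψ̄ be the induced endomorphisms of G/N. If the coincidence group Coin(φ̄,ψ̄) is finite and R(φ,ψ) is finite, then R(φ|_N, ψ|_N) is finite. -/

import Mathlib

/-- The (φ,ψ)-twisted conjugacy relation. -/
def twistRel {G : Type*} [Group G] (φ ψ : G →* G) : G → G → Prop :=
  fun a b => ∃ h : G, a = ψ h * b * (φ h)⁻¹

lemma twistRel_equivalence {G : Type*} [Group G] (φ ψ : G →* G) :
    Equivalence (twistRel φ ψ) := by
  constructor
  · intro a; exact ⟨1, by simp⟩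
  · rintro a b ⟨h, rfl⟩
    exact ⟨h⁻¹, by simp [map_inv]; group⟩
  · rintro a b c ⟨h, hh⟩ ⟨k, hk⟩
    refine ⟨h * k, ?_⟩
    rw [hh, hk, map_mul, map_mul]
    group

/-- if Coin(φ̄,ψ̄) is finite and R(φ,ψ) is finite, then R(φ|_N,ψ|_N) is finite. -/
theorem reidNr_restriction_finite {G : Type*} [Group G] (N : Subgroup G) [N.Normal]
    (φ ψ : G →* G) (hφ : N ≤ N.comap φ) (hψ : N ≤ N.comap ψ)
    (hCoin : Finite {x : G ⧸ N // QuotientGroup.map N N φ hφ x = QuotientGroup.map N N ψ hψ x})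
    (hR : Finite (Quot (twistRel φ ψ))) :
    Finite (Quot (twistRel
      ((φ.domRestrict N).codRestrict N (fun x => hφ x.2))
      ((ψ.domRestrict N).codRestrict N (fun x => hψ x.2)))) := by
  classical
  set φ' := (φ.domRestrict N).codRestrict N (fun x => hφ x.2) with hφ'def
  set ψ' := (ψ.domRestrict N).codRestrict N (fun x => hψ x.2) with hψ'def
  have hmap : ∀ a b : N, twistRel φ' ψ' a b → twistRel φ ψ (↑a) (↑b) := by
    rintro a b ⟨h, hab⟩
    refine ⟨(↑h : G), ?_⟩
    have := congrArg Subtype.val hab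
    exact this
  let F : Quot (twistRel φ' ψ') → Quot (twistRel φ ψ) := Quot.map Subtype.val hmap
  have key : ∀ q : Quot (twistRel φ ψ), Finite {q' // F q' = q} := by
    intro q
    rcases isEmpty_or_nonempty {q' // F q' = q} with he | hne
    · infer_instance
    · obtain ⟨⟨q', hq'⟩⟩ := hne
      obtain ⟨n₀, rfl⟩ := Quot.exists_rep q'
      set Coin := {x : G ⧸ N // QuotientGroup.map N N φ hφ x = QuotientGroup.map N N ψ hψ x}
        with hCoindef
      -- lift function
      have lift_spec : ∀ x : Coin, QuotientGroup.mk ((QuotientGroup.mk_surjective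
          (s := N) x.1).choose) = x.1 := fun x => (QuotientGroup.mk_surjective x.1).choose_spec
      have mem : ∀ x : Coin, ψ ((QuotientGroup.mk_surjective (s := N) x.1).choose) * ↑n₀ *
          (φ ((QuotientGroup.mk_surjective (s := N) x.1).choose))⁻¹ ∈ N := by
        intro x
        set g := (QuotientGroup.mk_surjective (s := N) x.1).choose with hg
        rw [← QuotientGroup.eq_one_iff]
        have h1 : (QuotientGroup.mk (↑n₀) : G ⧸ N) = 1 := (QuotientGroup.eq_one_iff _).mpr n₀.2
        have h2 : (QuotientGroup.mk (φ g) : G ⧸ N) = QuotientGroup.mk (ψ g) := by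
          have := x.2
          rw [← lift_spec x, ← hg] at this
          simpa [QuotientGroup.map_mk] using this
        show (QuotientGroup.mk (ψ g * ↑n₀ * (φ g)⁻¹) : G ⧸ N) = 1
        rw [QuotientGroup.mk_mul, QuotientGroup.mk_mul, QuotientGroup.mk_inv, h1, h2]
        group
      let s : Coin → {q' // F q' = q} := fun x =>
        ⟨Quot.mk _ (⟨_, mem x⟩ : N), by
          show Quot.mk (twistRel φ ψ) _ = q
          rw [← hq']
          exact Quot.sound ⟨(QuotientGroup.mk_surjective (s := N) x.1).choose, rfl⟩⟩
      have hs : Function.Surjective s := by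
        rintro ⟨q'', hq''⟩
        obtain ⟨n, rfl⟩ := Quot.exists_rep q''
        have heq : Quot.mk (twistRel φ ψ) (↑n : G) = Quot.mk (twistRel φ ψ) (↑n₀ : G) := by
          exact hq''.trans hq'.symm
        have hrel : twistRel φ ψ (↑n : G) (↑n₀ : G) :=
          ((twistRel_equivalence φ ψ).eqvGen_iff).mp (Quot.eqvGen_exact heq)
        obtain ⟨g, hg⟩ := hrel
        have hx : QuotientGroup.map N N φ hφ (QuotientGroup.mk g)
            = QuotientGroup.map N N ψ hψ (QuotientGroup.mk g) := by
          have h1 : (QuotientGroup.mk (↑n : G) : G ⧸ N) = 1 := (QuotientGroup.eq_one_iff _).mpr n.2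
          have h0 : (QuotientGroup.mk (↑n₀ : G) : G ⧸ N) = 1 :=
            (QuotientGroup.eq_one_iff _).mpr n₀.2
          have := congrArg (QuotientGroup.mk (s := N)) hg
          rw [QuotientGroup.mk_mul, QuotientGroup.mk_mul, QuotientGroup.mk_inv, h1, h0] at this
          simp only [QuotientGroup.map_mk]
          rw [mul_one] at this
          exact (mul_inv_eq_one.mp this.symm).symm
        refine ⟨⟨QuotientGroup.mk g, hx⟩, ?_⟩
        apply Subtype.ext
        show Quot.mk (twistRel φ' ψ') _ = Quot.mk (twistRel φ' ψ') n
        set g' := (QuotientGroup.mk_surjective (s := N)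
          ((⟨QuotientGroup.mk g, hx⟩ : Coin) : Coin).1).choose with hg'def
        have hgg' : (QuotientGroup.mk g' : G ⧸ N) = QuotientGroup.mk g :=
          lift_spec ⟨QuotientGroup.mk g, hx⟩
        have hmemN : g' * g⁻¹ ∈ N := by
          have h1 : g'⁻¹ * g ∈ N := (QuotientGroup.eq (s := N)).mp hgg'
          have h2 : g * (g'⁻¹ * g)⁻¹ * g⁻¹ ∈ N := Subgroup.Normal.conj_mem ‹N.Normal› _
            (N.inv_mem h1) g
          have : g * (g'⁻¹ * g)⁻¹ * g⁻¹ = g' * g⁻¹ := by group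
          rwa [this] at h2
        apply Quot.sound
        refine ⟨⟨g' * g⁻¹, hmemN⟩, ?_⟩
        apply Subtype.ext
        show ψ g' * ↑n₀ * (φ g')⁻¹ = ((ψ' ⟨g' * g⁻¹, hmemN⟩ : N) : G) * ↑n *
          (((φ' ⟨g' * g⁻¹, hmemN⟩ : N) : G))⁻¹
        have hψ'c : ((ψ' ⟨g' * g⁻¹, hmemN⟩ : N) : G) = ψ (g' * g⁻¹) := rfl
        have hφ'c : ((φ' ⟨g' * g⁻¹, hmemN⟩ : N) : G) = φ (g' * g⁻¹) := rfl
        rw [hψ'c, hφ'c, hg, map_mul, map_mul, map_inv, map_inv]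
        group
      exact Finite.of_surjective s hs
  haveI := key
  exact Finite.of_equiv _ (Equiv.sigmaFiberEquiv F)
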